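/- Let V be a type, let E be a relation on V that is acyclic (there is no v with Relation.TransGen E v v), and let s, t ∈ V. Define E' by E' x y ↔ E x y ∨ (x = t ∧ y = s). Then Relation.ReflTransGen E s t holds if and only if there exists v ∈ V with Relation.TransGen E' v v. -/

import Mathlib

/-- in a DAG, there is a path from `s` to `t` iff adding the
edge `(t, s)` creates a directed cycle. -/
theorem stmt5 {V : Type*} (E : V → V → Prop)
    (hacyc : ∀ v, ¬ Relation.TransGen E v v) (s t : V) :
    Relation.ReflTransGen E s t ↔
      ∃ v, Relation.TransGen (fun x y => E x y ∨ (x = t ∧ y = s)) v v := by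
  set E' : V → V → Prop := fun x y => E x y ∨ (x = t ∧ y = s) with hE'
  constructor
  · intro h
    refine ⟨s, ?_⟩
    have h1 : Relation.ReflTransGen E' s t :=
      Relation.ReflTransGen.mono (p := E') (fun a b hab => Or.inl hab) s t h
    exact Relation.TransGen.tail' h1 (Or.inr ⟨rfl, rfl⟩)
  · rintro ⟨v, hv⟩
    have key : ∀ a b, Relation.TransGen E' a b →
        Relation.TransGen E a b ∨
        (Relation.ReflTransGen E a t ∧ Relation.ReflTransGen E s b) := by
      intro a b hab
      induction hab with
      | single h =>
        rcases h with h | ⟨rfl, rfl⟩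
        · exact Or.inl (Relation.TransGen.single h)
        · exact Or.inr ⟨Relation.ReflTransGen.refl, Relation.ReflTransGen.refl⟩
      | tail _ h ih =>
        rcases h with h | ⟨rfl, rfl⟩
        · rcases ih with ih | ⟨h1, h2⟩
          · exact Or.inl (ih.tail h)
          · exact Or.inr ⟨h1, h2.tail h⟩
        · rcases ih with ih | ⟨h1, h2⟩
          · exact Or.inr ⟨ih.to_reflTransGen, Relation.ReflTransGen.refl⟩
          · exact Or.inr ⟨h1, Relation.ReflTransGen.refl⟩
    rcases key v v hv with h | ⟨h1, h2⟩
    · exact absurd h (hacyc v)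
    · exact h2.trans h1
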